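/- Let z be a root of a quadratic polynomial a·ζ² + b·ζ + c with a, b, c ∈ Γ which is irreducible over K. Let (a_n)_{n≥0} be a continued fraction expansion of z over Γ with iteration sequence (z_n)_{n≥0}, and suppose there exists an infinite neat subset N for the expansion. Then {z_{n+1} : n ∈ N} is finite. If moreover the continued fraction expansion is given by a Γ-valued continued fraction algorithm, then (a_n) is eventually periodic, i.e. there exist k ≥ 1 and n_0 such that a_{n+k} = a_n for all n ≥ n_0. -/

import Mathlib

/-- The quotient field of a subring `Γ` of `ℂ`, as a subset of `ℂ`. -/
def quotField (Γ : Subring ℂ) : Set ℂ :=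
  {x | ∃ p ∈ Γ, ∃ q ∈ Γ, q ≠ 0 ∧ x = p / q}

/-- `(a n)` is a continued fraction expansion of `z` over `Γ`, with iteration
sequence `(zs n)`: `zs 0 = z`, `0 < |zs n - a n| < 1` and `zs (n+1) = (zs n - a n)⁻¹`. -/
def IsCFE (Γ : Subring ℂ) (z : ℂ) (a zs : ℕ → ℂ) : Prop :=
  (∀ n, a n ∈ Γ) ∧ zs 0 = z ∧
    (∀ n, 0 < ‖zs n - a n‖ ∧ ‖zs n - a n‖ < 1) ∧
    (∀ n, zs (n + 1) = (zs n - a n)⁻¹)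

/-- The Q-pair of a sequence of partial quotients, with indices shifted by one:
`p (n+1)` is the paper's `p_n` and `q (n+1)` is the paper's `q_n`
(so `p 0 = p_{-1} = 1` and `q 0 = q_{-1} = 0`). -/
def IsQPair (a p q : ℕ → ℂ) : Prop :=
  p 0 = 1 ∧ p 1 = a 0 ∧ (∀ n, p (n + 2) = a (n + 1) * p (n + 1) + p n) ∧
  q 0 = 0 ∧ q 1 = 1 ∧ (∀ n, q (n + 2) = a (n + 1) * q (n + 1) + q n)


/-- The sequence of relative errors `δ_n = q_n (q_n z - p_n)` (index shifted by one
in `p`, `q`, so `relErr z p q n` is the paper's `δ_n`). -/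
def relErr (z : ℂ) (p q : ℕ → ℂ) (n : ℕ) : ℂ :=
  q (n + 1) * (q (n + 1) * z - p (n + 1))

/-- `N ⊆ ℕ` is a neat subset for the expansion: `|q_{n-1}| ≤ |q_n|` for all `n ∈ N`
and `liminf_{n ∈ N} |z_{n+1}| > 1` (there is `α > 1` with `|z_{n+1}| ≥ α` for all but
finitely many `n ∈ N`). Indices of `q` are shifted by one, so `q n` is the paper's `q_{n-1}`. -/
def IsNeat (zs q : ℕ → ℂ) (N : Set ℕ) : Prop :=
  (∀ n ∈ N, ‖q n‖ ≤ ‖q (n + 1)‖) ∧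
  ∃ α : ℝ, 1 < α ∧ {n | n ∈ N ∧ ‖zs (n + 1)‖ < α}.Finite

private lemma gamma_bounded_finite (Γ : Subring ℂ) (hdisc : DiscreteTopology Γ) (M : ℝ) :
    {x : ℂ | x ∈ Γ ∧ ‖x‖ ≤ M}.Finite := by
  haveI : DiscreteTopology (Γ : Set ℂ) := hdisc
  have hcl : IsClosed (Γ : Set ℂ) := by
    haveI : DiscreteTopology Γ.toAddSubgroup := hdisc
    exact AddSubgroup.isClosed_of_discrete (H := Γ.toAddSubgroup)
  have hb : Bornology.IsBounded (Metric.closedBall (0 : ℂ) M) := Metric.isBounded_closedBall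
  have hfin := Metric.finite_isBounded_inter_isClosed (K := Metric.closedBall (0 : ℂ) M)
    (s := (Γ : Set ℂ)) (isDiscrete_iff_discreteTopology.mpr this) hb hcl
  refine hfin.subset ?_
  rintro x ⟨hx1, hx2⟩
  exact ⟨by simpa [Complex.dist_eq] using hx2, hx1⟩

private lemma quad_roots_finite (a b c : ℂ) :
    {w : ℂ | a ≠ 0 ∧ a * w ^ 2 + b * w + c = 0}.Finite := by
  rcases eq_or_ne a 0 with h | h
  · convert Set.finite_empty
    ext w; simp [h]
  · have hp : (Polynomial.C a * Polynomial.X ^ 2 + Polynomial.C b * Polynomial.X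
        + Polynomial.C c : Polynomial ℂ) ≠ 0 := by
      intro hcon
      have h2 := congrArg (fun pp => Polynomial.coeff pp 2) hcon
      simp [Polynomial.coeff_add, Polynomial.coeff_C] at h2
      exact h h2
    refine (Polynomial.finite_setOf_isRoot hp).subset ?_
    rintro w ⟨-, hw⟩
    simp only [Set.mem_setOf_eq, Polynomial.IsRoot, Polynomial.eval_add, Polynomial.eval_mul,
      Polynomial.eval_pow, Polynomial.eval_C, Polynomial.eval_X]
    exact hw

private lemma tail_bnd (aA w K : ℝ) (haA : 0 ≤ aA) (hwK : 0 ≤ w * K) :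
    aA * 1 + aA * w * K ≤ 2 * aA * (1 + w * K) := by nlinarith

private lemma real_bnd (x x' u t d α : ℝ) (hx' : 0 ≤ x') (hx'x : x' ≤ x) (hu : 0 ≤ u)
    (hud : u * d = 1) (hdx : x * (t - 1) ≤ d) (hd : 0 < d) (hα : 1 < α) (hαt : α ≤ t) :
    x * u ≤ 1 / (α - 1) ∧ x * (t * u) ≤ α / (α - 1) := by
  have hα1 : (0:ℝ) < α - 1 := by linarith
  have hx : 0 ≤ x := le_trans hx' hx'x
  constructor
  · rw [le_div_iff₀ hα1]
    have h1 : x * (α - 1) ≤ d := by nlinarith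
    nlinarith [mul_le_mul_of_nonneg_left h1 hu]
  · rw [le_div_iff₀ hα1]
    have h2 : α * (u * (x * (t - 1))) ≤ α * (u * d) := by
      apply mul_le_mul_of_nonneg_left _ (by linarith)
      exact mul_le_mul_of_nonneg_left hdx hu
    rw [hud, mul_one] at h2
    nlinarith [mul_nonneg (mul_nonneg hu hx) (sub_nonneg.mpr hαt)]

set_option maxHeartbeats 1000000 in
/-- Corollary 3.4 (Lagrange-type theorem): if `z` is a root of a quadratic polynomial
`A ζ² + B ζ + C` with `A, B, C ∈ Γ` which is irreducible over the quotient field `K`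
(equivalently: `A ≠ 0` and the polynomial has no root in `K`), and the expansion admits
an infinite neat subset `N`, then `{z_{n+1} : n ∈ N}` is finite; and if the expansion is
given by an algorithm then the partial quotients are eventually periodic. -/
theorem stmt_7 (Γ : Subring ℂ) (hdisc : DiscreteTopology Γ)
    (A B C : ℂ) (hA : A ∈ Γ) (hB : B ∈ Γ) (hC : C ∈ Γ) (hA0 : A ≠ 0)
    (hirr : ∀ w ∈ quotField Γ, A * w ^ 2 + B * w + C ≠ 0)
    (z : ℂ) (hroot : A * z ^ 2 + B * z + C = 0)
    (a zs p q : ℕ → ℂ) (hcf : IsCFE Γ z a zs) (hpq : IsQPair a p q)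
    (N : Set ℕ) (hNinf : N.Infinite) (hneat : IsNeat zs q N) :
    {w : ℂ | ∃ n ∈ N, w = zs (n + 1)}.Finite
    ∧ ((∃ f : ℂ → ℂ, (∀ ζ : ℂ, f ζ ∈ Γ) ∧ (∀ ζ : ℂ, ‖ζ - f ζ‖ < 1) ∧
          ∀ n, a n = f (zs n))
        → ∃ k : ℕ, 1 ≤ k ∧ ∃ n₀ : ℕ, ∀ n ≥ n₀, a (n + k) = a n) := by
  obtain ⟨haΓ, hz0, habs, hrec⟩ := hcf
  obtain ⟨hp0, hp1, hpr, hq0, hq1, hqr⟩ := hpq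
  obtain ⟨hqle, α, hα, hFfin⟩ := hneat
  -- ## Basic facts about the error terms `q m * z - p m`
  have hne : ∀ m, zs m - a m ≠ 0 := by
    intro m h
    have := (habs m).1
    rw [h] at this; simp at this
  have hUrec : ∀ m, q (m+1) * z - p (m+1) = -(zs m - a m) * (q m * z - p m) := by
    intro m
    induction m with
    | zero => rw [hq0, hq1, hp0, hp1, hz0]; ring
    | succ k ih =>
      have hUk : q k * z - p k = -(zs (k+1)) * (q (k+1) * z - p (k+1)) := by
        rw [hrec k, ih]
        field_simp
        rw [eq_div_iff (hne k)]
      have hrec2 : q (k+2) * z - p (k+2) = a (k+1) * (q (k+1) * z - p (k+1)) + (q k * z - p k) := by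
        rw [hpr k, hqr k]; ring
      rw [hrec2, hUk]; ring
  have hUne : ∀ m, q m * z - p m ≠ 0 := by
    intro m
    induction m with
    | zero => rw [hq0, hp0]; simp
    | succ k ih =>
      rw [hUrec k]
      exact mul_ne_zero (neg_ne_zero.mpr (hne k)) ih
  have hUabs : ∀ m, ‖q m * z - p m‖ ≤ 1 := by
    intro m
    induction m with
    | zero => rw [hq0, hp0]; simp
    | succ k ih =>
      rw [hUrec k]
      rw [norm_mul, norm_neg]
      calc ‖zs k - a k‖ * ‖q k * z - p k‖
          ≤ 1 * 1 := by
            apply mul_le_mul (habs k).2.le ih (norm_nonneg _) zero_le_one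
        _ = 1 := by ring
  have htU : ∀ m, zs (m+1) * (q (m+1) * z - p (m+1)) = -(q m * z - p m) := by
    intro m
    rw [hUrec m, hrec m]
    field_simp
    rw [mul_div_cancel_left₀ _ (hne m)]
  have hdet : ∀ m, q m * (q (m+1) * z - p (m+1)) - q (m+1) * (q m * z - p m) = (-1)^m := by
    intro m
    induction m with
    | zero => rw [hq0, hq1, hp0]; simp
    | succ k ih =>
      have hrec2 : q (k+2) * z - p (k+2) = a (k+1) * (q (k+1) * z - p (k+1)) + (q k * z - p k) := by
        rw [hpr k, hqr k]; ring
      rw [hrec2, hqr k]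
      ring_nf
      ring_nf at ih
      linear_combination -ih
  have hkey : ∀ m, (q (m+1) * z - p (m+1)) * (q (m+1) * zs (m+1) + q m) = (-1)^m := by
    intro m
    linear_combination q (m+1) * htU m + hdet m
  have hkeyabs : ∀ m,
      ‖q (m+1) * z - p (m+1)‖ * ‖q (m+1) * zs (m+1) + q m‖ = 1 := by
    intro m
    rw [← norm_mul, hkey m]
    simp
  have htwo : (2:ℂ) ∈ Γ := by
    have h := add_mem Γ.one_mem Γ.one_mem
    norm_num at h
    norm_num
  have hpqΓ : ∀ m, p m ∈ Γ ∧ q m ∈ Γ := by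
    have H : ∀ m, (p m ∈ Γ ∧ q m ∈ Γ) ∧ (p (m+1) ∈ Γ ∧ q (m+1) ∈ Γ) := by
      intro m
      induction m with
      | zero =>
        refine ⟨⟨?_, ?_⟩, ?_, ?_⟩ <;> simp [hp0, hp1, hq0, hq1]
        exact haΓ 0
      | succ k ih =>
        refine ⟨ih.2, ?_, ?_⟩
        · rw [hpr k]; exact add_mem (mul_mem (haΓ _) ih.2.1) ih.1.1
        · rw [hqr k]; exact add_mem (mul_mem (haΓ _) ih.2.2) ih.1.2
    exact fun m => (H m).1
  -- ## The conjugate root and the quadratic satisfied by `zs (n+1)`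
  set z' : ℂ := -B / A - z with hz'
  have h1 : A * (z + z') + B = 0 := by
    rw [hz']; field_simp; ring_nf
  have h2 : A * z * z' = C := by
    rw [hz']; field_simp; linear_combination -hroot
  have hz'root : A * z' ^ 2 + B * z' + C = 0 := by
    linear_combination hroot + (z' - z) * h1
  have hlin : ∀ n, z * (q (n+1) * zs (n+1) + q n) = p (n+1) * zs (n+1) + p n := by
    intro n
    linear_combination htU n
  have hroots : ∀ n,
      (A * p (n+1)^2 + B * p (n+1) * q (n+1) + C * q (n+1)^2) * zs (n+1)^2
      + (2*A*p (n+1)*p n + B*(p (n+1)*q n + p n * q (n+1)) + 2*C*q (n+1)*q n) * zs (n+1)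
      + (A * p n^2 + B * p n * q n + C * q n^2) = 0 := by
    intro n
    linear_combination (q (n+1) * zs (n+1) + q n)^2 * hroot
      - (A*((p (n+1)*zs (n+1)+p n) + z*(q (n+1)*zs (n+1)+q n)) + B*(q (n+1)*zs (n+1)+q n))
        * hlin n
  have hAAfac : ∀ n, A * p (n+1)^2 + B * p (n+1) * q (n+1) + C * q (n+1)^2
      = A * (q (n+1)*z - p (n+1)) * (q (n+1)*z' - p (n+1)) := by
    intro n
    linear_combination p (n+1) * q (n+1) * h1 - q (n+1)^2 * h2
  have hCCfac : ∀ n, A * p n^2 + B * p n * q n + C * q n^2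
      = A * (q n * z - p n) * (q n * z' - p n) := by
    intro n
    linear_combination p n * q n * h1 - q n^2 * h2
  have hBBfac : ∀ n, 2*A*p (n+1)*p n + B*(p (n+1)*q n + p n * q (n+1)) + 2*C*q (n+1)*q n
      = A * ((q (n+1)*z - p (n+1)) * (q n * z' - p n)
        + (q n * z - p n) * (q (n+1)*z' - p (n+1))) := by
    intro n
    linear_combination (p (n+1) * q n + p n * q (n+1)) * h1 - 2 * q (n+1) * q n * h2
  have hAAne : ∀ n, A * p (n+1)^2 + B * p (n+1) * q (n+1) + C * q (n+1)^2 ≠ 0 := by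
    intro n
    rw [hAAfac n]
    have hV : q (n+1) * z' - p (n+1) ≠ 0 := by
      rcases eq_or_ne (q (n+1)) 0 with h | h
      · have hu := hUne (n+1)
        rw [h] at hu ⊢
        simpa using hu
      · intro hcon
        apply hirr (p (n+1) / q (n+1))
          ⟨p (n+1), (hpqΓ (n+1)).1, q (n+1), (hpqΓ (n+1)).2, h, rfl⟩
        have hz'eq : z' = p (n+1) / q (n+1) := by
          rw [eq_div_iff h]
          linear_combination hcon
        rw [← hz'eq]
        exact hz'root
    exact mul_ne_zero (mul_ne_zero hA0 (hUne (n+1))) hV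
  -- ## Bounds on the coefficients for neat indices
  set M : ℝ := 2 * ‖A‖ * (1 + ‖z' - z‖ * (α / (α - 1))) with hM
  have hbnd : ∀ n, ‖q n‖ ≤ ‖q (n+1)‖ →
      α ≤ ‖zs (n+1)‖ →
      ‖A * p (n+1)^2 + B * p (n+1) * q (n+1) + C * q (n+1)^2‖ ≤ M
      ∧ ‖2*A*p (n+1)*p n + B*(p (n+1)*q n + p n * q (n+1)) + 2*C*q (n+1)*q n‖ ≤ M
      ∧ ‖A * p n^2 + B * p n * q n + C * q n^2‖ ≤ M := by
    intro n hqle' ht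
    set U1 := q (n+1) * z - p (n+1) with hU1
    set U0 := q n * z - p n with hU0
    set D := q (n+1) * zs (n+1) + q n with hD
    have hDpos : 0 < ‖D‖ := by
      rcases (norm_nonneg D).lt_or_eq with h | h
      · exact h
      · exfalso
        have := hkeyabs n
        rw [← hD, ← hU1, ← h] at this
        simp at this
    have htri : ‖q (n+1) * zs (n+1)‖ ≤ ‖D‖ + ‖q n‖ := by
      have h := norm_add_le D (-q n)
      simpa [hD] using h
    have hDlow : ‖q (n+1)‖ * (‖zs (n+1)‖ - 1) ≤ ‖D‖ := by
      have := htri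
      rw [norm_mul] at this
      nlinarith [hqle']
    have hud : ‖U1‖ * ‖D‖ = 1 := by
      rw [hU1, hD]; exact hkeyabs n
    have hbnds := real_bnd (‖q (n+1)‖) (‖q n‖) (‖U1‖)
      (‖zs (n+1)‖) (‖D‖) α (norm_nonneg _) hqle'
      (norm_nonneg _) hud hDlow hDpos hα ht
    have hU0eq : ‖U0‖ = ‖zs (n+1)‖ * ‖U1‖ := by
      rw [← norm_mul]
      have h := htU n
      rw [← hU1, ← hU0] at h
      rw [h]
      simp
    have bQU1 : ‖q (n+1)‖ * ‖U1‖ ≤ 1 / (α - 1) := hbnds.1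
    have bQU0 : ‖q (n+1)‖ * ‖U0‖ ≤ α / (α - 1) := by
      rw [hU0eq]; exact hbnds.2
    have bQ'U1 : ‖q n‖ * ‖U1‖ ≤ 1 / (α - 1) :=
      le_trans (mul_le_mul_of_nonneg_right hqle' (norm_nonneg _)) bQU1
    have bQ'U0 : ‖q n‖ * ‖U0‖ ≤ α / (α - 1) :=
      le_trans (mul_le_mul_of_nonneg_right hqle' (norm_nonneg _)) bQU0
    have hone : 1 / (α - 1) ≤ α / (α - 1) := by
      apply div_le_div_of_nonneg_right ?_ (by linarith)
      · linarith
    have haA : 0 ≤ ‖A‖ := norm_nonneg _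
    have hw : 0 ≤ ‖z' - z‖ := norm_nonneg _
    have hu1 : ‖U1‖ ≤ 1 := hUabs (n+1)
    have hu0 : ‖U0‖ ≤ 1 := hUabs n
    have hu1n : 0 ≤ ‖U1‖ := norm_nonneg _
    have hu0n : 0 ≤ ‖U0‖ := norm_nonneg _
    have hKpos : 0 ≤ α / (α - 1) := div_nonneg (by linarith) (by linarith)
    have hwK : 0 ≤ ‖z' - z‖ * (α / (α - 1)) := mul_nonneg hw hKpos
    refine ⟨?_, ?_, ?_⟩
    · have hAA2 : A * p (n+1)^2 + B * p (n+1) * q (n+1) + C * q (n+1)^2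
          = A * U1^2 + A * (z' - z) * (q (n+1) * U1) := by
        rw [hAAfac, hU1]; ring
      rw [hAA2, hM]
      calc ‖A * U1^2 + A * (z' - z) * (q (n+1) * U1)‖
          ≤ ‖A * U1^2‖ + ‖A * (z' - z) * (q (n+1) * U1)‖ :=
            norm_add_le _ _
        _ = ‖A‖ * (‖U1‖ * ‖U1‖)
            + ‖A‖ * ‖z' - z‖ * (‖q (n+1)‖ * ‖U1‖) := by
            simp only [norm_mul, norm_pow]; ring
        _ ≤ ‖A‖ * 1 + ‖A‖ * ‖z' - z‖ * (α / (α - 1)) := by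
            refine add_le_add (mul_le_mul_of_nonneg_left (mul_le_one₀ hu1 hu1n hu1) haA)
              (mul_le_mul_of_nonneg_left (le_trans bQU1 hone) (mul_nonneg haA hw))
        _ ≤ 2 * ‖A‖ * (1 + ‖z' - z‖ * (α / (α - 1))) :=
            tail_bnd _ _ _ haA hwK
    · have hBB2 : 2*A*p (n+1)*p n + B*(p (n+1)*q n + p n * q (n+1)) + 2*C*q (n+1)*q n
          = 2 * A * U1 * U0 + A * (z' - z) * (q n * U1 + q (n+1) * U0) := by
        rw [hBBfac, hU1, hU0]; ring
      rw [hBB2, hM]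
      calc ‖2 * A * U1 * U0 + A * (z' - z) * (q n * U1 + q (n+1) * U0)‖
          ≤ ‖2 * A * U1 * U0‖
            + ‖A * (z' - z) * (q n * U1 + q (n+1) * U0)‖ :=
            norm_add_le _ _
        _ ≤ 2 * ‖A‖ * (‖U1‖ * ‖U0‖)
            + ‖A‖ * ‖z' - z‖
              * (‖q n‖ * ‖U1‖ + ‖q (n+1)‖ * ‖U0‖) := by
            rw [norm_mul, norm_mul, norm_mul, norm_mul, norm_mul]
            simp only [Complex.norm_two]
            refine add_le_add (le_of_eq (by ring)) ?_
            refine mul_le_mul_of_nonneg_left ?_ (mul_nonneg haA hw)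
            calc ‖q n * U1 + q (n+1) * U0‖
                ≤ ‖q n * U1‖ + ‖q (n+1) * U0‖ := norm_add_le _ _
              _ = ‖q n‖ * ‖U1‖
                  + ‖q (n+1)‖ * ‖U0‖ := by
                  rw [norm_mul, norm_mul]
        _ ≤ 2 * ‖A‖ * 1
            + ‖A‖ * ‖z' - z‖ * (α / (α - 1) + α / (α - 1)) := by
            refine add_le_add (mul_le_mul_of_nonneg_left (mul_le_one₀ hu1 hu0n hu0) (by linarith))
              (mul_le_mul_of_nonneg_left (add_le_add (le_trans bQ'U1 hone) bQU0)
                (mul_nonneg haA hw))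
        _ ≤ 2 * ‖A‖ * (1 + ‖z' - z‖ * (α / (α - 1))) :=
            le_of_eq (by ring)
    · have hCC2 : A * p n^2 + B * p n * q n + C * q n^2
          = A * U0^2 + A * (z' - z) * (q n * U0) := by
        rw [hCCfac, hU0]; ring
      rw [hCC2, hM]
      calc ‖A * U0^2 + A * (z' - z) * (q n * U0)‖
          ≤ ‖A * U0^2‖ + ‖A * (z' - z) * (q n * U0)‖ :=
            norm_add_le _ _
        _ = ‖A‖ * (‖U0‖ * ‖U0‖)
            + ‖A‖ * ‖z' - z‖ * (‖q n‖ * ‖U0‖) := by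
            simp only [norm_mul, norm_pow]; ring
        _ ≤ ‖A‖ * 1 + ‖A‖ * ‖z' - z‖ * (α / (α - 1)) := by
            refine add_le_add (mul_le_mul_of_nonneg_left (mul_le_one₀ hu0 hu0n hu0) haA)
              (mul_le_mul_of_nonneg_left bQ'U0 (mul_nonneg haA hw))
        _ ≤ 2 * ‖A‖ * (1 + ‖z' - z‖ * (α / (α - 1))) :=
            tail_bnd _ _ _ haA hwK
  -- ## Membership of the coefficients in Γ
  have hAAmem : ∀ n, A * p (n+1)^2 + B * p (n+1) * q (n+1) + C * q (n+1)^2 ∈ Γ := by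
    intro n
    exact add_mem (add_mem (mul_mem hA (pow_mem (hpqΓ (n+1)).1 2))
      (mul_mem (mul_mem hB (hpqΓ (n+1)).1) (hpqΓ (n+1)).2))
      (mul_mem hC (pow_mem (hpqΓ (n+1)).2 2))
  have hCCmem : ∀ n, A * p n^2 + B * p n * q n + C * q n^2 ∈ Γ := by
    intro n
    exact add_mem (add_mem (mul_mem hA (pow_mem (hpqΓ n).1 2))
      (mul_mem (mul_mem hB (hpqΓ n).1) (hpqΓ n).2))
      (mul_mem hC (pow_mem (hpqΓ n).2 2))
  have hBBmem : ∀ n,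
      2*A*p (n+1)*p n + B*(p (n+1)*q n + p n * q (n+1)) + 2*C*q (n+1)*q n ∈ Γ := by
    intro n
    refine add_mem (add_mem ?_ ?_) ?_
    · exact mul_mem (mul_mem (mul_mem htwo hA) (hpqΓ (n+1)).1) (hpqΓ n).1
    · exact mul_mem hB (add_mem (mul_mem (hpqΓ (n+1)).1 (hpqΓ n).2)
        (mul_mem (hpqΓ n).1 (hpqΓ (n+1)).2))
    · exact mul_mem (mul_mem (mul_mem htwo hC) (hpqΓ (n+1)).2) (hpqΓ n).2
  -- ## Finiteness
  set S : Set ℂ := {x : ℂ | x ∈ Γ ∧ ‖x‖ ≤ M} with hSdef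
  have hS : S.Finite := gamma_bounded_finite Γ hdisc M
  set R : Set ℂ :=
    {w : ℂ | ∃ a' ∈ S, ∃ b' ∈ S, ∃ c' ∈ S, a' ≠ 0 ∧ a' * w ^ 2 + b' * w + c' = 0} with hRdef
  have hR : R.Finite := by
    have hsub : R ⊆ ⋃ a' ∈ S, ⋃ b' ∈ S, ⋃ c' ∈ S,
        {w : ℂ | a' ≠ 0 ∧ a' * w ^ 2 + b' * w + c' = 0} := by
      rintro w ⟨a', ha', b', hb', c', hc', h1', h2'⟩
      simp only [Set.mem_iUnion]
      exact ⟨a', ha', b', hb', c', hc', h1', h2'⟩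
    exact ((hS.biUnion fun a' _ => hS.biUnion fun b' _ => hS.biUnion fun c' _ =>
      quad_roots_finite a' b' c').subset hsub)
  have hmain : {w : ℂ | ∃ n ∈ N, w = zs (n + 1)}.Finite := by
    have hsub : {w : ℂ | ∃ n ∈ N, w = zs (n + 1)} ⊆
        ((fun n => zs (n+1)) '' {n | n ∈ N ∧ ‖zs (n + 1)‖ < α}) ∪ R := by
      rintro w ⟨n, hn, rfl⟩
      by_cases hcase : ‖zs (n+1)‖ < α
      · exact Or.inl ⟨n, ⟨hn, hcase⟩, rfl⟩
      · right
        push_neg at hcase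
        obtain ⟨b1, b2, b3⟩ := hbnd n (hqle n hn) hcase
        exact ⟨_, ⟨hAAmem n, b1⟩, _, ⟨hBBmem n, b2⟩, _, ⟨hCCmem n, b3⟩, hAAne n, hroots n⟩
    exact (((hFfin.image _).union hR).subset hsub)
  refine ⟨hmain, ?_⟩
  -- ## Eventual periodicity
  rintro ⟨f, hf1, hf2, hf3⟩
  have hmaps : Set.MapsTo (fun n => zs (n+1)) N {w : ℂ | ∃ n ∈ N, w = zs (n + 1)} :=
    fun n hn => ⟨n, hn, rfl⟩
  obtain ⟨i, hi, j, hj, hij, heq⟩ := hNinf.exists_ne_map_eq_of_mapsTo hmaps hmain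
  have key : ∀ i j : ℕ, i < j → zs (i+1) = zs (j+1) →
      ∃ k : ℕ, 1 ≤ k ∧ ∃ n₀ : ℕ, ∀ n ≥ n₀, a (n + k) = a n := by
    intro i j hij hz
    have hzs : ∀ d, zs (i+1+d) = zs (j+1+d) := by
      intro d
      induction d with
      | zero => simpa using hz
      | succ e ih =>
        have ha' : a (i+1+e) = a (j+1+e) := by rw [hf3, hf3, ih]
        have e1 : zs (i+1+(e+1)) = (zs (i+1+e) - a (i+1+e))⁻¹ := hrec (i+1+e)
        have e2 : zs (j+1+(e+1)) = (zs (j+1+e) - a (j+1+e))⁻¹ := hrec (j+1+e)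
        rw [e1, e2, ih, ha']
    refine ⟨j - i, by omega, i+1, fun n hn => ?_⟩
    have hd : n + (j - i) = j+1 + (n - (i+1)) := by omega
    have hn' : n = i+1 + (n - (i+1)) := by omega
    calc a (n + (j - i)) = a (j+1+(n - (i+1))) := by rw [hd]
      _ = f (zs (j+1+(n - (i+1)))) := hf3 _
      _ = f (zs (i+1+(n - (i+1)))) := by rw [← hzs]
      _ = a (i+1+(n - (i+1))) := (hf3 _).symm
      _ = a n := by rw [← hn']
  rcases hij.lt_or_gt with h | h
  · exact key i j h heq
  · exact key j i h heq.symm
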